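/- Let M(3) be a 10×10 bivariate real moment matrix (of a sequence β^{(6)}) that is positive semidefinite with M(2) positive definite. If rank M(3) = 9, then the algebraic variety V(M(3)) is infinite; in particular, the case rank M(3) = card V(M(3)) = 9 is impossible. -/

import Mathlib

open MeasureTheory MvPolynomial

/-- Index set for moments/monomials of degree at most `n`. -/
abbrev Idx (n : ℕ) := {p : Fin (n+1) × Fin (n+1) // (p.1 : ℕ) + (p.2 : ℕ) ≤ n}

/-- The moment matrix `M(n)` associated with the sequence `β`. -/
noncomputable def momentMatrix (n : ℕ) (β : ℕ → ℕ → ℝ) : Matrix (Idx n) (Idx n) ℝ :=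
  fun p q => β ((p.1.1 : ℕ) + (q.1.1 : ℕ)) ((p.1.2 : ℕ) + (q.1.2 : ℕ))

/-- Coefficient vector of a bivariate polynomial, indexed by monomials of degree ≤ n. -/
noncomputable def coeffVec (n : ℕ) (p : MvPolynomial (Fin 2) ℝ) : Idx n → ℝ :=
  fun q => p.coeff (Finsupp.single 0 (q.1.1 : ℕ) + Finsupp.single 1 (q.1.2 : ℕ))

/-- The algebraic variety of the moment matrix `M(n)`. -/
def variety (n : ℕ) (β : ℕ → ℕ → ℝ) : Set (ℝ × ℝ) :=
  {z | ∀ p : MvPolynomial (Fin 2) ℝ, p.totalDegree ≤ n →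
     (momentMatrix n β).mulVec (coeffVec n p) = 0 → eval ![z.1, z.2] p = 0}

/-- `μ` is a representing measure for the degree-`2n` moment sequence `β`. -/
def Represents (n : ℕ) (β : ℕ → ℕ → ℝ) (μ : Measure (ℝ × ℝ)) : Prop :=
  ∀ i j : ℕ, i + j ≤ 2 * n →
    Integrable (fun z : ℝ × ℝ => z.1 ^ i * z.2 ^ j) μ ∧
    β i j = ∫ z : ℝ × ℝ, z.1 ^ i * z.2 ^ j ∂μ

/-- The Riesz functional associated with `β`. -/
noncomputable def riesz (β : ℕ → ℕ → ℝ) (p : MvPolynomial (Fin 2) ℝ) : ℝ :=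
  ∑ d ∈ p.support, p.coeff d * β (d 0) (d 1)

/-- The closed support of a measure on `ℝ²`. -/
def msupport (μ : Measure (ℝ × ℝ)) : Set (ℝ × ℝ) :=
  {z | ∀ U : Set (ℝ × ℝ), IsOpen U → z ∈ U → μ U ≠ 0}


section Aux
open Matrix


lemma finsupp_fin2_eq (d : Fin 2 →₀ ℕ) :
    d = Finsupp.single 0 (d 0) + Finsupp.single 1 (d 1) := by
  ext i
  fin_cases i <;> simp [Finsupp.single_apply]

lemma finsupp_fin2_sum (d : Fin 2 →₀ ℕ) : (d.sum fun _ e => e) = d 0 + d 1 := by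
  rw [Finsupp.sum_fintype _ _ (fun _ => rfl)]
  exact Fin.sum_univ_two d


/-- If a polynomial of total degree ≤ n has zero coefficient vector, it is zero. -/
lemma eq_zero_of_coeffVec_zero (n : ℕ) (p : MvPolynomial (Fin 2) ℝ)
    (hdeg : p.totalDegree ≤ n) (h : coeffVec n p = 0) : p = 0 := by
  ext d
  rw [coeff_zero]
  by_cases hd : d ∈ p.support
  · have hsum : d 0 + d 1 ≤ n := by
      have := le_totalDegree hd
      rw [finsupp_fin2_sum] at this
      omega
    have h0 : d 0 ≤ n := by omega
    have h1 : d 1 ≤ n := by omega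
    have := congrFun h ⟨(⟨d 0, by omega⟩, ⟨d 1, by omega⟩), by simpa using hsum⟩
    simp only [coeffVec, Pi.zero_apply] at this
    rwa [finsupp_fin2_eq d]
  · exact notMem_support_iff.mp hd

noncomputable def polyOf (n : ℕ) (v : Idx n → ℝ) : MvPolynomial (Fin 2) ℝ :=
  ∑ q : Idx n, monomial (Finsupp.single 0 (q.1.1 : ℕ) + Finsupp.single 1 (q.1.2 : ℕ)) (v q)

lemma idx_inj {n : ℕ} (q r : Idx n)
    (h : (Finsupp.single (0 : Fin 2) (q.1.1 : ℕ) + Finsupp.single 1 (q.1.2 : ℕ)) =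
         (Finsupp.single (0 : Fin 2) (r.1.1 : ℕ) + Finsupp.single 1 (r.1.2 : ℕ))) : q = r := by
  have h0 := DFunLike.congr_fun h 0
  have h1 := DFunLike.congr_fun h 1
  simp [Finsupp.single_apply] at h0 h1
  ext
  · exact h0
  · exact h1

lemma coeffVec_polyOf (n : ℕ) (v : Idx n → ℝ) : coeffVec n (polyOf n v) = v := by
  funext q
  rw [coeffVec, polyOf]
  rw [coeff_sum]
  rw [Finset.sum_eq_single q]
  · simp
  · intro r _ hrq
    rw [coeff_monomial, if_neg]
    intro h
    exact hrq (idx_inj r q h)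
  · simp

lemma totalDegree_polyOf (n : ℕ) (v : Idx n → ℝ) : (polyOf n v).totalDegree ≤ n := by
  refine le_trans (totalDegree_finset_sum _ _) (Finset.sup_le fun q _ => ?_)
  refine le_trans (totalDegree_monomial_le _ _) ?_
  show ((Finsupp.single (0 : Fin 2) (q.1.1 : ℕ) + Finsupp.single 1 (q.1.2 : ℕ)).sum fun _ e => e) ≤ n
  rw [finsupp_fin2_sum]
  have := q.2
  simp only [Finsupp.add_apply, Finsupp.single_apply]
  simpa using this

lemma coeffVec_smul (n : ℕ) (c : ℝ) (p : MvPolynomial (Fin 2) ℝ) :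
    coeffVec n (c • p) = c • coeffVec n p := by
  funext q; simp [coeffVec]

lemma coeffVec_sub (n : ℕ) (p q : MvPolynomial (Fin 2) ℝ) :
    coeffVec n (p - q) = coeffVec n p - coeffVec n q := by
  funext r; simp [coeffVec, coeff_sub]


def emb : Idx 2 → Idx 3 := fun r =>
  ⟨(⟨(r.1.1 : ℕ), by omega⟩, ⟨(r.1.2 : ℕ), by omega⟩), by simpa using le_trans r.2 (by omega)⟩

lemma emb_inj : Function.Injective emb := by
  intro r s h
  simp only [emb, Subtype.mk.injEq, Prod.mk.injEq, Fin.mk.injEq] at h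
  ext
  · exact h.1
  · exact h.2

lemma exists_deg3_ne_zero (β : ℕ → ℕ → ℝ) (hpd : (momentMatrix 2 β).PosDef)
    (v : Idx 3 → ℝ) (hv : (momentMatrix 3 β).mulVec v = 0) (hv0 : v ≠ 0) :
    ∃ q : Idx 3, (q.1.1 : ℕ) + (q.1.2 : ℕ) = 3 ∧ v q ≠ 0 := by
  by_contra hcon
  push_neg at hcon
  -- v vanishes on degree-3 indices
  have hdeg3 : ∀ q : Idx 3, (q.1.1 : ℕ) + (q.1.2 : ℕ) = 3 → v q = 0 := hcon
  set w : Idx 2 → ℝ := fun r => v (emb r) with hw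
  have hw0 : w ≠ 0 := by
    intro h0
    apply hv0
    funext q
    by_cases hq : (q.1.1 : ℕ) + (q.1.2 : ℕ) = 3
    · exact hdeg3 q hq
    · have hle : (q.1.1 : ℕ) + (q.1.2 : ℕ) ≤ 2 := by have := q.2; omega
      have : q = emb ⟨(⟨(q.1.1 : ℕ), by omega⟩, ⟨(q.1.2 : ℕ), by omega⟩), by simpa using hle⟩ := by
        apply Subtype.ext
        apply Prod.ext <;> exact (Fin.ext rfl).symm
      rw [this]
      exact congrFun h0 _
  -- the quadratic form identity
  have hquad : w ⬝ᵥ (momentMatrix 2 β).mulVec w = v ⬝ᵥ (momentMatrix 3 β).mulVec v := by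
    simp only [dotProduct, Matrix.mulVec, dotProduct]
    have hzero : ∀ p : Idx 3, p ∉ Finset.univ.image emb →
        v p * ∑ q : Idx 3, momentMatrix 3 β p q * v q = 0 := by
      intro p hp
      have : (p.1.1 : ℕ) + (p.1.2 : ℕ) = 3 := by
        by_contra h3
        apply hp
        have hle : (p.1.1 : ℕ) + (p.1.2 : ℕ) ≤ 2 := by have := p.2; omega
        refine Finset.mem_image.mpr ⟨⟨(⟨(p.1.1 : ℕ), by omega⟩, ⟨(p.1.2 : ℕ), by omega⟩), by simpa using hle⟩, Finset.mem_univ _, ?_⟩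
        apply Subtype.ext
        apply Prod.ext <;> exact Fin.ext rfl
      rw [hdeg3 p this, zero_mul]
    have hinner : ∀ p : Idx 3, ∀ q : Idx 3, q ∉ Finset.univ.image emb →
        momentMatrix 3 β p q * v q = 0 := by
      intro p q hq
      have : (q.1.1 : ℕ) + (q.1.2 : ℕ) = 3 := by
        by_contra h3
        apply hq
        have hle : (q.1.1 : ℕ) + (q.1.2 : ℕ) ≤ 2 := by have := q.2; omega
        refine Finset.mem_image.mpr ⟨⟨(⟨(q.1.1 : ℕ), by omega⟩, ⟨(q.1.2 : ℕ), by omega⟩), by simpa using hle⟩, Finset.mem_univ _, ?_⟩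
        apply Subtype.ext
        apply Prod.ext <;> exact Fin.ext rfl
      rw [hdeg3 q this, mul_zero]
    rw [show (∑ p : Idx 3, v p * ∑ q : Idx 3, momentMatrix 3 β p q * v q) =
        ∑ p ∈ Finset.univ.image emb, v p * ∑ q : Idx 3, momentMatrix 3 β p q * v q from
      (Finset.sum_subset (Finset.subset_univ _) (fun p _ hp => hzero p hp)).symm]
    rw [Finset.sum_image (fun a _ b _ h => emb_inj h)]
    apply Finset.sum_congr rfl
    intro r _
    congr 1
    rw [show (∑ q : Idx 3, momentMatrix 3 β (emb r) q * v q) =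
        ∑ q ∈ Finset.univ.image emb, momentMatrix 3 β (emb r) q * v q from
      (Finset.sum_subset (Finset.subset_univ _) (fun q _ hq => hinner (emb r) q hq)).symm]
    rw [Finset.sum_image (fun a _ b _ h => emb_inj h)]
    apply Finset.sum_congr rfl
    intro s _
    congr 1
  rw [hv, dotProduct_zero] at hquad
  have := hpd.dotProduct_mulVec_pos hw0
  rw [show (star w) = w from rfl] at this
  rw [hquad] at this
  exact lt_irrefl 0 this


lemma degree_fin2 (d : Fin 2 →₀ ℕ) : d.degree = d 0 + d 1 := by
  rw [Finsupp.degree, ← finsupp_fin2_sum d]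
  rfl

lemma finsupp_fin2_prod {M : Type*} [CommMonoid M] (d : Fin 2 →₀ ℕ) (f : Fin 2 → ℕ → M)
    (hf : ∀ i, f i 0 = 1) : (d.prod f) = f 0 (d 0) * f 1 (d 1) := by
  rw [Finsupp.prod_fintype _ _ (fun i => hf i)]
  exact Fin.prod_univ_two _

-- coefficient-3 extraction along a line
lemma coeff3_aeval (p : MvPolynomial (Fin 2) ℝ) (hdeg : p.totalDegree ≤ 3) (a g : Fin 2 → ℝ) :
    (MvPolynomial.aeval
        (fun i => Polynomial.C (a i) + Polynomial.C (g i) * Polynomial.X) p).coeff 3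
      = eval g (homogeneousComponent 3 p) := by
  set f : Fin 2 → Polynomial ℝ := fun i => Polynomial.C (a i) + Polynomial.C (g i) * Polynomial.X with hf
  have hL : ∀ i, (f i).natDegree ≤ 1 := by
    intro i
    refine le_trans (Polynomial.natDegree_add_le _ _) ?_
    simp only [Polynomial.natDegree_C, max_le_iff]
    exact ⟨by omega, le_trans (Polynomial.natDegree_C_mul_le _ _) (by simp)⟩
  have hLcoeff : ∀ i, (f i).coeff 1 = g i := by
    intro i; simp [hf]
  conv_lhs => rw [p.as_sum]
  rw [map_sum, Polynomial.finset_sum_coeff]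
  rw [homogeneousComponent_apply, Finset.sum_filter, map_sum]
  apply Finset.sum_congr rfl
  intro d hd
  have hdle : d 0 + d 1 ≤ 3 := by
    have := le_totalDegree hd
    rw [finsupp_fin2_sum] at this
    omega
  rw [aeval_monomial, degree_fin2]
  have hprod : (d.prod fun i k => f i ^ k) = f 0 ^ d 0 * f 1 ^ d 1 :=
    finsupp_fin2_prod d _ (fun i => pow_zero _)
  rw [hprod, ← mul_assoc]
  have hnd : ∀ i k, (f i ^ k).natDegree ≤ k := fun i k =>
    le_trans (Polynomial.natDegree_pow_le) (by nlinarith [hL i])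
  by_cases h3 : d 0 + d 1 = 3
  · rw [if_pos h3]
    have algC : (algebraMap ℝ (Polynomial ℝ)) (coeff d p) = Polynomial.C (coeff d p) := rfl
    rw [algC]
    have h1 : (Polynomial.C (coeff d p) * (f 0 ^ d 0) * (f 1 ^ d 1)).coeff 3 =
        (Polynomial.C (coeff d p) * (f 0 ^ d 0)).coeff (d 0) * (f 1 ^ d 1).coeff (d 1) := by
      rw [← h3]
      apply Polynomial.coeff_mul_add_eq_of_natDegree_le
      · have : (Polynomial.C (coeff d p) * (f 0 ^ d 0)).natDegree ≤ 0 + d 0 :=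
          Polynomial.natDegree_mul_le.trans
            (add_le_add (le_of_eq (Polynomial.natDegree_C _)) (hnd 0 (d 0)))
        omega
      · exact hnd 1 (d 1)
    rw [h1, Polynomial.coeff_C_mul]
    have h0 : (f 0 ^ d 0).coeff (d 0) = g 0 ^ d 0 := by
      have := Polynomial.coeff_pow_of_natDegree_le (hL 0) (m := d 0)
      rw [mul_one] at this
      rw [this, hLcoeff 0]
    have h1' : (f 1 ^ d 1).coeff (d 1) = g 1 ^ d 1 := by
      have := Polynomial.coeff_pow_of_natDegree_le (hL 1) (m := d 1)
      rw [mul_one] at this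
      rw [this, hLcoeff 1]
    rw [h0, h1', eval_monomial]
    rw [finsupp_fin2_prod d _ (fun i => pow_zero _)]
    ring
  · rw [if_neg h3]
    apply Polynomial.coeff_eq_zero_of_natDegree_lt
    have : (algebraMap ℝ (Polynomial ℝ) (coeff d p) * f 0 ^ d 0 * f 1 ^ d 1).natDegree ≤ d 0 + d 1 := by
      apply le_trans (Polynomial.natDegree_mul_le)
      have h1 : (algebraMap ℝ (Polynomial ℝ) (coeff d p) * f 0 ^ d 0).natDegree ≤ 0 + d 0 :=
        Polynomial.natDegree_mul_le.trans
          (add_le_add (by simp [Polynomial.natDegree_C]) (hnd 0 (d 0)))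
      have h2 := hnd 1 (d 1)
      omega
    omega

open Polynomial in
theorem odd_natDegree_exists_root (q : Polynomial ℝ) (h : Odd q.natDegree) :
    ∃ x : ℝ, q.eval x = 0 := by
  have hq0 : q ≠ 0 := by rintro rfl; simp [Nat.odd_iff] at h
  have key : ∀ p : Polynomial ℝ, Odd p.natDegree → 0 < p.leadingCoeff → ∃ x : ℝ, p.eval x = 0 := by
    intro p hodd hlc
    have hd : 0 < p.natDegree := Nat.pos_of_ne_zero (by rintro h0; rw [h0] at hodd; simp [Nat.odd_iff] at hodd)
    have hd' : 0 < p.degree := natDegree_pos_iff_degree_pos.mp hd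
    have hb : ∃ b, 0 < p.eval b :=
      ((p.tendsto_atTop_of_leadingCoeff_nonneg hd' hlc.le).eventually
        (Filter.eventually_gt_atTop 0)).exists
    set r : Polynomial ℝ := p.comp (-(Polynomial.X : Polynomial ℝ)) with hr
    have hrdeg : r.natDegree = p.natDegree := by rw [hr, natDegree_comp]; simp
    have hrlc : r.leadingCoeff = p.leadingCoeff * (-1) ^ p.natDegree := by
      rw [hr, leadingCoeff_comp (by simp)]; simp
    have hrlc' : r.leadingCoeff < 0 := by rw [hrlc, hodd.neg_one_pow]; nlinarith
    have hrd' : 0 < r.degree := natDegree_pos_iff_degree_pos.mp (hrdeg ▸ hd)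
    obtain ⟨a, ha⟩ : ∃ a, r.eval a < 0 :=
      ((r.tendsto_atBot_of_leadingCoeff_nonpos hrd' hrlc'.le).eventually
        (Filter.eventually_lt_atBot 0)).exists
    obtain ⟨b, hb⟩ := hb
    have ha' : p.eval (-a) < 0 := by
      rwa [hr, Polynomial.eval_comp, Polynomial.eval_neg, Polynomial.eval_X] at ha
    obtain ⟨x, hx⟩ : (0 : ℝ) ∈ Set.range fun x => p.eval x :=
      intermediate_value_univ (-a) b (p.continuous_aeval) ⟨ha'.le, hb.le⟩
    exact ⟨x, hx⟩
  rcases lt_trichotomy q.leadingCoeff 0 with hlc | hlc | hlc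
  · obtain ⟨x, hx⟩ := key (-q) (by simpa using h) (by simpa using hlc)
    exact ⟨x, by simpa using hx⟩
  · exact absurd (leadingCoeff_eq_zero.mp hlc) hq0
  · exact key q h hlc

theorem zeroset_infinite (p : MvPolynomial (Fin 2) ℝ) (hdeg : p.totalDegree ≤ 3)
    (hc : homogeneousComponent 3 p ≠ 0) :
    {z : ℝ × ℝ | eval ![z.1, z.2] p = 0}.Infinite := by
  obtain ⟨g, hg⟩ : ∃ g : Fin 2 → ℝ, eval g (homogeneousComponent 3 p) ≠ 0 := by
    by_contra h
    push_neg at h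
    exact hc (MvPolynomial.funext fun x => by simpa using h x)
  have hgg : (0 : ℝ) < g 0 ^ 2 + g 1 ^ 2 := by
    rcases (show g 0 ≠ 0 ∨ g 1 ≠ 0 by
      by_contra h
      push_neg at h
      apply hg
      rw [homogeneousComponent_apply, map_sum]
      apply Finset.sum_eq_zero
      intro d hd
      have hd3 : d 0 + d 1 = 3 := by
        have := (Finset.mem_filter.mp hd).2
        rwa [degree_fin2] at this
      rw [eval_monomial, finsupp_fin2_prod d _ (fun i => pow_zero _), h.1, h.2]
      rcases Nat.eq_zero_or_pos (d 0) with h0 | h0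
      · have : d 1 ≠ 0 := by omega
        simp [zero_pow this]
      · simp [zero_pow (by omega : d 0 ≠ 0)]) with h | h
    · positivity
    · positivity
  -- for each s, construct a root point on the line through (-s g1, s g0) in direction g
  have key : ∀ s : ℝ, ∃ t : ℝ,
      eval ![-(s * g 1) + g 0 * t, s * g 0 + g 1 * t] p = 0 := by
    intro s
    set a : Fin 2 → ℝ := ![-(s * g 1), s * g 0] with ha
    set f : Fin 2 → Polynomial ℝ :=
      fun i => Polynomial.C (a i) + Polynomial.C (g i) * Polynomial.X with hf
    set q : Polynomial ℝ := MvPolynomial.aeval f p with hq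
    have hc3 : q.coeff 3 = eval g (homogeneousComponent 3 p) := coeff3_aeval p hdeg a g
    have hq3 : q.natDegree ≤ 3 := by
      rw [hq]
      conv_lhs => rw [p.as_sum, map_sum]
      refine le_trans (Polynomial.natDegree_sum_le _ _) ?_
      rw [Finset.fold_max_le]
      refine ⟨by omega, fun d hd => ?_⟩
      show (MvPolynomial.aeval f ((monomial d) (coeff d p))).natDegree ≤ 3
      have hdle : d 0 + d 1 ≤ 3 := by
        have := le_totalDegree hd
        rw [finsupp_fin2_sum] at this
        omega
      rw [aeval_monomial, finsupp_fin2_prod d _ (fun i => pow_zero _), ← mul_assoc]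
      have hL : ∀ i, (f i).natDegree ≤ 1 := by
        intro i
        refine le_trans (Polynomial.natDegree_add_le _ _) ?_
        simp only [Polynomial.natDegree_C, max_le_iff]
        exact ⟨by omega, le_trans (Polynomial.natDegree_C_mul_le _ _) (by simp)⟩
      have hnd : ∀ i k, (f i ^ k).natDegree ≤ k := fun i k =>
        le_trans (Polynomial.natDegree_pow_le) (by nlinarith [hL i])
      have h1 : (algebraMap ℝ (Polynomial ℝ) (coeff d p) * f 0 ^ d 0).natDegree ≤ 0 + d 0 :=
        Polynomial.natDegree_mul_le.trans
          (add_le_add (by simp) (hnd 0 (d 0)))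
      have h2 := hnd 1 (d 1)
      have := Polynomial.natDegree_mul_le
        (p := algebraMap ℝ (Polynomial ℝ) (coeff d p) * f 0 ^ d 0) (q := f 1 ^ d 1)
      omega
    have hqdeg : q.natDegree = 3 := by
      refine le_antisymm hq3 ?_
      exact Polynomial.le_natDegree_of_ne_zero (by rw [hc3]; exact hg)
    obtain ⟨t, ht⟩ := odd_natDegree_exists_root q (by rw [hqdeg]; exact ⟨1, rfl⟩)
    refine ⟨t, ?_⟩
    have heval : Polynomial.eval t q = eval (fun i => a i + g i * t) p := by
      rw [hq, MvPolynomial.aeval_def, show algebraMap ℝ (Polynomial ℝ) = Polynomial.C from rfl]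
      rw [show Polynomial.eval t (eval₂ Polynomial.C f p)
          = (Polynomial.evalRingHom t) (eval₂ Polynomial.C f p) from rfl]
      rw [MvPolynomial.eval₂_comp_left (Polynomial.evalRingHom t)]
      rw [MvPolynomial.eval]
      congr 1
      · ext x
        simp
      · funext i
        simp [hf]
    rw [heval] at ht
    have harr : ![-(s * g 1) + g 0 * t, s * g 0 + g 1 * t] = fun i => a i + g i * t := by
      funext i
      fin_cases i <;> simp [ha]
    rw [harr]
    exact ht
  choose t ht using key
  refine Set.infinite_of_injective_forall_mem
    (f := fun s : ℝ => ((-(s * g 1) + g 0 * t s, s * g 0 + g 1 * t s) : ℝ × ℝ)) ?_ ?_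
  · intro s s' hss
    have e1 : -(s * g 1) + g 0 * t s = -(s' * g 1) + g 0 * t s' := congrArg Prod.fst hss
    have e2 : s * g 0 + g 1 * t s = s' * g 0 + g 1 * t s' := congrArg Prod.snd hss
    have : (s - s') * (g 0 ^ 2 + g 1 ^ 2) = 0 := by linear_combination (g 0) * e2 - (g 1) * e1
    rcases mul_eq_zero.mp this with h | h
    · linarith
    · exact absurd h hgg.ne'
  · intro s
    exact ht s

end Aux
/-- if `M(3) ≥ 0`, `M(2) > 0`, and `rank M(3) = 9`, then the algebraic
variety is infinite; in particular `rank M(3) = card V(M(3)) = 9` is impossible. -/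
theorem rank_nine_variety_infinite (β : ℕ → ℕ → ℝ)
    (hpsd : (momentMatrix 3 β).PosSemidef) (hpd : (momentMatrix 2 β).PosDef)
    (hrank : (momentMatrix 3 β).rank = 9) :
    (variety 3 β).Infinite ∧ (variety 3 β).encard ≠ 9 := by
  classical
  set M := momentMatrix 3 β with hM
  set K := LinearMap.ker M.mulVecLin with hK
  -- the kernel is one-dimensional
  have hker1 : Module.finrank ℝ K = 1 := by
    rw [hK]
    have h1 := LinearMap.finrank_range_add_finrank_ker M.mulVecLin
    have h2 : Module.finrank ℝ (Idx 3 → ℝ) = 10 := by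
      rw [Module.finrank_fintype_fun_eq_card]; decide
    rw [h2] at h1
    have h3 : M.rank = Module.finrank ℝ (LinearMap.range M.mulVecLin) := rfl
    rw [hrank] at h3
    omega
  have hvex : ∃ v ∈ K, v ≠ 0 ∧ ∀ w ∈ K, ∃ c : ℝ, w = c • v := by
    have hne : K ≠ ⊥ := by
      intro hbot
      rw [hbot, finrank_bot] at hker1
      omega
    obtain ⟨v, hvK, hv0⟩ := Submodule.exists_mem_ne_zero_of_ne_bot hne
    refine ⟨v, hvK, hv0, ?_⟩
    have hfd : FiniteDimensional ℝ K := Module.finite_of_finrank_eq_succ hker1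
    have hspan : Submodule.span ℝ {v} = K := by
      apply Submodule.eq_of_le_of_finrank_le
      · rwa [Submodule.span_singleton_le_iff_mem]
      · rw [hker1, finrank_span_singleton hv0]
    intro w hw
    rw [← hspan] at hw
    obtain ⟨c, hc⟩ := Submodule.mem_span_singleton.mp hw
    exact ⟨c, hc.symm⟩
  obtain ⟨v, hvK, hv0, hvspan⟩ := hvex
  have hvmul : M.mulVec v = 0 := by
    have := hvK
    rw [hK, LinearMap.mem_ker] at this
    rwa [Matrix.mulVecLin_apply] at this
  -- the spanning kernel polynomial
  set p₀ : MvPolynomial (Fin 2) ℝ := polyOf 3 v with hp₀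
  have hcv : coeffVec 3 p₀ = v := coeffVec_polyOf 3 v
  have hdeg₀ : p₀.totalDegree ≤ 3 := totalDegree_polyOf 3 v
  -- its cubic part is nonzero
  have hhc : homogeneousComponent 3 p₀ ≠ 0 := by
    obtain ⟨q, hq3, hqv⟩ := exists_deg3_ne_zero β hpd v hvmul hv0
    intro h0
    apply hqv
    have hdeg : (Finsupp.single (0 : Fin 2) (q.1.1 : ℕ) + Finsupp.single 1 (q.1.2 : ℕ)).degree = 3 := by
      rw [degree_fin2]
      simpa [Finsupp.single_apply] using hq3
    have := coeff_homogeneousComponent (σ := Fin 2) (R := ℝ) 3 p₀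
      (Finsupp.single 0 (q.1.1 : ℕ) + Finsupp.single 1 (q.1.2 : ℕ))
    rw [h0, if_pos hdeg, coeff_zero] at this
    rw [← hcv]
    exact this.symm
  -- the zero set of p₀ is infinite and contained in the variety
  have hsub : {z : ℝ × ℝ | eval ![z.1, z.2] p₀ = 0} ⊆ variety 3 β := by
    intro z hz p hpdeg hpker
    have hmem : coeffVec 3 p ∈ K := by
      rw [hK, LinearMap.mem_ker, Matrix.mulVecLin_apply]
      exact hpker
    obtain ⟨c, hc⟩ := hvspan _ hmem
    have hpc : p = c • p₀ := by
      have hsubdeg : (p - c • p₀).totalDegree ≤ 3 := by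
        rw [sub_eq_add_neg]
        refine le_trans (totalDegree_add _ _) ?_
        rw [totalDegree_neg]
        exact max_le hpdeg (le_trans (totalDegree_smul_le _ _) hdeg₀)
      have hcv0 : coeffVec 3 (p - c • p₀) = 0 := by
        rw [coeffVec_sub, coeffVec_smul, hcv, hc]
        funext r
        simp
      have := eq_zero_of_coeffVec_zero 3 _ hsubdeg hcv0
      have := sub_eq_zero.mp this
      exact this
    rw [hpc, smul_eq_C_mul, map_mul, eval_C, hz, mul_zero]
  have hinf : (variety 3 β).Infinite :=
    (zeroset_infinite p₀ hdeg₀ hhc).mono hsub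
  refine ⟨hinf, ?_⟩
  rw [hinf.encard_eq]
  decide
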